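/- If the matrix A has rank one, i.e. (a_1 d_0 + b_0 b_1)(a_0 d_1 + c_0 c_1) = (a_0 b_1 + a_1 c_0)(b_0 d_1 + c_1 d_0), then v_{2n} = K·u_{2n} for all n ≥ 1, where K = (b_0 d_1 + c_1 d_0)/(a_1 d_0 + b_0 b_1). -/

import Mathlib

open Finset Filter Topology

theorem stmt_3
    (x y a b c d : ℕ → ℝ)
    (hx0 : 0 < x 0) (hy0 : 0 < y 0)
    (hapos : ∀ n, 0 < a n) (hbpos : ∀ n, 0 < b n)
    (hcpos : ∀ n, 0 < c n) (hdpos : ∀ n, 0 < d n)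
    (haper : ∀ n, a (n + 2) = a n) (hbper : ∀ n, b (n + 2) = b n)
    (hcper : ∀ n, c (n + 2) = c n) (hdper : ∀ n, d (n + 2) = d n)
    (hxrec : ∀ n, x (n + 1) = a n / x n + b n / y n)
    (hyrec : ∀ n, y (n + 1) = c n / x n + d n / y n)
    (u v : ℕ → ℝ)
    (hu : ∀ n, u n = (∏ k ∈ Finset.range (n + 1), x k) * ∏ k ∈ Finset.range n, y k)
    (hv : ∀ n, v n = (∏ k ∈ Finset.range n, x k) * ∏ k ∈ Finset.range (n + 1), y k)
    (hrank : (a 1 * d 0 + b 0 * b 1) * (a 0 * d 1 + c 0 * c 1) =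
      (a 0 * b 1 + a 1 * c 0) * (b 0 * d 1 + c 1 * d 0))
    (K : ℝ) (hK : K = (b 0 * d 1 + c 1 * d 0) / (a 1 * d 0 + b 0 * b 1))
    : ∀ n : ℕ, 1 ≤ n → v (2 * n) = K * u (2 * n) := by
  have hpos : ∀ n, 0 < x n ∧ 0 < y n := by
    intro n
    induction n with
    | zero => exact ⟨hx0, hy0⟩
    | succ n ih =>
      obtain ⟨hx, hy⟩ := ih
      have ha := hapos n; have hb := hbpos n; have hc := hcpos n; have hd := hdpos n
      constructor
      · rw [hxrec]; positivity
      · rw [hyrec]; positivity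
  have hxy : ∀ n, x n * v n = y n * u n := by
    intro n
    rw [hu, hv]
    simp only [Finset.prod_range_succ]
    ring
  have hurec : ∀ n, u (n + 1) = a n * v n + b n * u n := by
    intro n
    have hx := (hpos n).1.ne'
    have hy := (hpos n).2.ne'
    have h1 : u (n + 1) = x (n + 1) * (y n * u n) := by
      rw [hu, hu]
      simp only [Finset.prod_range_succ]
      ring
    rw [h1, hxrec n]
    have h2 := hxy n
    field_simp
    linear_combination (-(a n)) * h2
  have hvrec : ∀ n, v (n + 1) = d n * u n + c n * v n := by
    intro n
    have hx := (hpos n).1.ne'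
    have hy := (hpos n).2.ne'
    have h1 : v (n + 1) = y (n + 1) * (x n * v n) := by
      rw [hv, hv]
      simp only [Finset.prod_range_succ]
      ring
    rw [h1, hyrec n]
    have h2 := hxy n
    field_simp
    linear_combination (d n) * h2
  have per2 : ∀ (f : ℕ → ℝ), (∀ n, f (n + 2) = f n) →
      ∀ n, f (2 * n) = f 0 ∧ f (2 * n + 1) = f 1 := by
    intro f hf n
    induction n with
    | zero => exact ⟨rfl, rfl⟩
    | succ n ih =>
      have e1 : 2 * (n + 1) = 2 * n + 2 := by ring
      have e2 : 2 * n + 2 + 1 = 2 * n + 1 + 2 := by ring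
      rw [e1, hf, e2, hf]
      exact ih
  intro n hn
  obtain ⟨m, rfl⟩ : ∃ m, n = m + 1 := ⟨n - 1, (Nat.succ_pred_eq_of_pos hn).symm⟩
  have e : 2 * (m + 1) = (2 * m + 1) + 1 := by ring
  have hu2 : u (2 * (m + 1)) =
      (a 1 * d 0 + b 0 * b 1) * u (2 * m) + (a 0 * b 1 + a 1 * c 0) * v (2 * m) := by
    rw [e, hurec, hvrec, hurec,
      (per2 a haper m).2, (per2 b hbper m).2,
      (per2 a haper m).1, (per2 b hbper m).1,
      (per2 c hcper m).1, (per2 d hdper m).1]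
    ring
  have hv2 : v (2 * (m + 1)) =
      (b 0 * d 1 + c 1 * d 0) * u (2 * m) + (a 0 * d 1 + c 0 * c 1) * v (2 * m) := by
    rw [e, hvrec, hvrec, hurec,
      (per2 c hcper m).2, (per2 d hdper m).2,
      (per2 a haper m).1, (per2 b hbper m).1,
      (per2 c hcper m).1, (per2 d hdper m).1]
    ring
  have hA11 : (0:ℝ) < a 1 * d 0 + b 0 * b 1 := by
    have := hapos 1; have := hdpos 0; have := hbpos 0; have := hbpos 1
    positivity
  have hK1 : K * (a 1 * d 0 + b 0 * b 1) = b 0 * d 1 + c 1 * d 0 := by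
    rw [hK]; exact div_mul_cancel₀ _ hA11.ne'
  have hK2 : K * (a 0 * b 1 + a 1 * c 0) = a 0 * d 1 + c 0 * c 1 := by
    rw [hK, div_mul_eq_mul_div, div_eq_iff hA11.ne']
    linear_combination -hrank
  rw [hu2, hv2]
  linear_combination (-(u (2 * m))) * hK1 + (-(v (2 * m))) * hK2
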